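/- Let F be a finite extension of Q_p with uniformizer ϖ and residue degree f, let d = p^k, and let φ(X) = X^d + Σ_{i=1}^{d-1} a_i X^i + a_0 with a_i ∈ O_F, v_F(a_i) > 0 for 0 < i < d, and a_0 ∈ O_F. Assume f | k or a_0 ∈ Q. Then for every positive integer n, φ^n(X) ≡ X^{d^n} + n·a_0 (mod ϖ) as polynomials over the residue field O_F/(ϖ). -/
import Mathlib


open Polynomial

/-- The residue field of the valuation ring `{x : F | ‖x‖ ≤ 1}` has exactly `q` elements. -/
def HasResidueCard (F : Type*) [NormedField F] (q : ℕ) : Prop :=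
  ∃ S : Finset F, S.card = q ∧ (∀ x ∈ S, ‖x‖ ≤ 1) ∧
    (∀ x ∈ S, ∀ y ∈ S, x ≠ y → 1 ≤ ‖x - y‖) ∧
    ∀ z : F, ‖z‖ ≤ 1 → ∃ x ∈ S, ‖z - x‖ < 1

section IterAux

variable {F : Type*} [NormedField F] [IsUltrametricDist F]

/-- The ring of integers (closed unit ball) of an ultrametric normed field. -/
def intSubring (F : Type*) [NormedField F] [IsUltrametricDist F] : Subring F where
  carrier := {x | ‖x‖ ≤ 1}
  mul_mem' := fun {a b} (ha : ‖a‖ ≤ 1) (hb : ‖b‖ ≤ 1) => by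
    show ‖a * b‖ ≤ 1
    rw [norm_mul]
    exact mul_le_one₀ ha (norm_nonneg _) hb
  one_mem' := by show ‖(1 : F)‖ ≤ 1; simp
  add_mem' := fun {a b} ha hb =>
    (IsUltrametricDist.norm_add_le_max a b).trans (max_le ha hb)
  zero_mem' := by show ‖(0 : F)‖ ≤ 1; simp
  neg_mem' := fun {a} ha => by show ‖-a‖ ≤ 1; simpa using ha

lemma mem_intSubring {x : F} : x ∈ intSubring F ↔ ‖x‖ ≤ 1 := Iff.rfl

/-- The maximal ideal (open unit ball) of the ring of integers. -/
def maxIdl (F : Type*) [NormedField F] [IsUltrametricDist F] : Ideal (intSubring F) where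
  carrier := {x | ‖(x : F)‖ < 1}
  add_mem' := fun {a b} ha hb => by
    show ‖((a + b : intSubring F) : F)‖ < 1
    push_cast
    exact lt_of_le_of_lt (IsUltrametricDist.norm_add_le_max _ _) (max_lt ha hb)
  zero_mem' := by show ‖((0 : intSubring F) : F)‖ < 1; simp
  smul_mem' := fun c x hx => by
    show ‖((c * x : intSubring F) : F)‖ < 1
    push_cast
    rw [norm_mul]
    exact lt_of_le_of_lt (mul_le_of_le_one_left (norm_nonneg _) c.2) hx

lemma mem_maxIdl {x : intSubring F} : x ∈ maxIdl F ↔ ‖(x : F)‖ < 1 := Iff.rfl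

instance maxIdl_isMaximal : (maxIdl F).IsMaximal := by
  rw [Ideal.isMaximal_iff]
  constructor
  · rw [mem_maxIdl]; simp
  · intro I x hle hxM hxI
    rw [mem_maxIdl, not_lt] at hxM
    have hx1 : ‖(x : F)‖ = 1 := le_antisymm x.2 hxM
    have hx0 : (x : F) ≠ 0 := fun h => by simp [h] at hx1
    have hinv : ((x : F)⁻¹) ∈ intSubring F := by
      rw [mem_intSubring, norm_inv, hx1]; norm_num
    have h1 : (⟨(x : F)⁻¹, hinv⟩ * x : intSubring F) = 1 := by
      ext
      push_cast
      exact inv_mul_cancel₀ hx0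
    exact h1 ▸ I.mul_mem_left _ hxI

noncomputable instance : Field (intSubring F ⧸ maxIdl F) := Ideal.Quotient.field _

/-- Every element of the residue field satisfies `x ^ q = x` where `q` is the residue card. -/
lemma pow_residueCard {q : ℕ} (hres : HasResidueCard F q)
    (x : intSubring F ⧸ maxIdl F) : x ^ q = x := by
  obtain ⟨S, hcard, hle, hsep, hcover⟩ := hres
  let e : S → intSubring F ⧸ maxIdl F :=
    fun s => Ideal.Quotient.mk (maxIdl F) ⟨s.1, hle s.1 s.2⟩
  have hbij : Function.Bijective e := by
    constructor
    · intro a b hab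
      have h := Ideal.Quotient.eq.mp hab
      rw [mem_maxIdl] at h
      by_contra hne
      have hne' : (a : F) ≠ (b : F) := fun hh => hne (Subtype.ext hh)
      have h2 := hsep a.1 a.2 b.1 b.2 hne'
      have h3 : ‖(a : F) - (b : F)‖ < 1 := by simpa using h
      linarith
    · intro z
      obtain ⟨w, rfl⟩ := Ideal.Quotient.mk_surjective z
      obtain ⟨x0, hxS, hx0⟩ := hcover w.1 w.2
      refine ⟨⟨x0, hxS⟩, ?_⟩
      show Ideal.Quotient.mk _ _ = _
      rw [Ideal.Quotient.eq, mem_maxIdl]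
      have h4 : ‖x0 - (w : F)‖ < 1 := by
        rw [← norm_neg]; simpa [neg_sub] using hx0
      simpa using h4
  haveI : Fintype (intSubring F ⧸ maxIdl F) := Fintype.ofBijective e hbij
  have hc : Fintype.card (intSubring F ⧸ maxIdl F) = q := by
    rw [← Fintype.card_of_bijective hbij, Fintype.card_coe, hcard]
  calc x ^ q = x ^ Fintype.card (intSubring F ⧸ maxIdl F) := by rw [hc]
  _ = x := FiniteField.pow_card x

end IterAux

set_option maxHeartbeats 1000000 in
theorem iterate_congruent_mod_uniformizer {p : ℕ} [Fact p.Prime] {F : Type*} [NormedField F]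
    [Algebra ℚ_[p] F] [FiniteDimensional ℚ_[p] F] [IsUltrametricDist F]
    (hext : ∀ x : ℚ_[p], ‖algebraMap ℚ_[p] F x‖ = ‖x‖)
    (f : ℕ) (hres : HasResidueCard F (p ^ f))
    (ϖ : F) (hϖ0 : 0 < ‖ϖ‖) (hϖ1 : ‖ϖ‖ < 1) (hϖmax : ∀ x : F, ‖x‖ < 1 → ‖x‖ ≤ ‖ϖ‖)
    (k d : ℕ) (hk : 1 ≤ k) (hd : d = p ^ k)
    (φ : Polynomial F) (hdeg : φ.natDegree = d) (hmonic : φ.coeff d = 1)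
    (hint : ∀ i, ‖φ.coeff i‖ ≤ 1)
    (hsmall : ∀ i, 0 < i → i < d → ‖φ.coeff i‖ < 1)
    (hass : f ∣ k ∨ ∃ q : ℚ, φ.coeff 0 = (q : F)) :
    ∀ n : ℕ, 1 ≤ n → ∀ j : ℕ,
      ‖((fun ψ : Polynomial F => φ.comp ψ)^[n] X
          - (X ^ (d ^ n) + C ((n : F) * φ.coeff 0))).coeff j‖ ≤ ‖ϖ‖ := by
  classical
  have hp : p.Prime := Fact.out
  have hd1 : 1 ≤ d := by rw [hd]; exact Nat.one_le_pow _ _ hp.pos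
  have hnatnorm : ∀ m : ℕ, ‖(m : F)‖ ≤ 1 := fun m => by
    rw [show ((m : F)) = algebraMap ℚ_[p] F (m : ℚ_[p]) from (map_natCast _ m).symm, hext]
    exact_mod_cast Padic.norm_int_le_one (p := p) (m : ℤ)
  have hpnorm : ‖(p : F)‖ < 1 := by
    rw [show ((p : F)) = algebraMap ℚ_[p] F (p : ℚ_[p]) from (map_natCast _ p).symm, hext,
      Padic.norm_p]
    rw [inv_lt_one_iff₀]
    right; exact_mod_cast hp.one_lt
  -- integral model of φ
  have hsub : (↑φ.coeffs : Set F) ⊆ (intSubring F : Set F) := by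
    intro x hx
    rw [Finset.mem_coe, Polynomial.mem_coeffs_iff] at hx
    obtain ⟨i, _, rfl⟩ := hx
    exact hint i
  set φO : Polynomial (intSubring F) := φ.toSubring (intSubring F) hsub with hφOdef
  have hmapφ : φO.map (intSubring F).subtype = φ := Polynomial.map_toSubring φ _ hsub
  have hiter : ∀ m : ℕ, (fun ψ : Polynomial F => φ.comp ψ)^[m] X
      = ((fun ψ : Polynomial (intSubring F) => φO.comp ψ)^[m] X).map (intSubring F).subtype := by
    intro m
    induction m with
    | zero => simp
    | succ m ih =>
      rw [Function.iterate_succ_apply', Function.iterate_succ_apply', ih,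
        Polynomial.map_comp, hmapφ]
  -- the residue field
  set ρ := Ideal.Quotient.mk (maxIdl F) with hρdef
  have hpzero : ((p : intSubring F ⧸ maxIdl F)) = 0 := by
    rw [← map_natCast ρ, hρdef, Ideal.Quotient.eq_zero_iff_mem, mem_maxIdl]
    simpa using hpnorm
  haveI hchar : CharP (intSubring F ⧸ maxIdl F) p :=
    (CharP.charP_iff_prime_eq_zero hp).mpr hpzero
  set c0 : intSubring F ⧸ maxIdl F := ρ (φO.coeff 0) with hc0def
  -- reduction of φ mod the maximal ideal
  have hψ : φO.map ρ = X ^ d + C c0 := by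
    ext i
    rw [coeff_map, coeff_add, coeff_X_pow, coeff_C]
    by_cases h0 : i = 0
    · subst h0
      rw [if_neg (by omega : ¬(0 = d)), if_pos rfl, zero_add, hc0def]
    · rw [if_neg h0, add_zero]
      by_cases hdi : i = d
      · subst hdi
        have h1 : φO.coeff i = 1 :=
          Subtype.ext (by rw [Polynomial.coeff_toSubring']; simpa using hmonic)
        rw [if_pos rfl, h1, map_one]
      · rw [if_neg hdi]
        by_cases hlt : i < d
        · rw [hρdef]
          apply Ideal.Quotient.eq_zero_iff_mem.mpr
          rw [mem_maxIdl,
            show ((φO.coeff i : F)) = φ.coeff i from Polynomial.coeff_toSubring' _ _ hsub]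
          exact hsmall i (Nat.pos_of_ne_zero h0) hlt
        · have h2 : φO.coeff i = 0 := Subtype.ext (by
            rw [Polynomial.coeff_toSubring']
            simpa using Polynomial.coeff_eq_zero_of_natDegree_lt
              (by omega : φ.natDegree < i))
          rw [h2, map_zero]
  -- fixed points of iterated powers
  have hfix : ∀ (q : ℕ) (x : intSubring F ⧸ maxIdl F), x ^ q = x → ∀ t, x ^ q ^ t = x := by
    intro q x hx t
    induction t with
    | zero => rw [pow_zero, pow_one]
    | succ t ih => rw [pow_succ, pow_mul, ih, hx]
  -- Fermat for naturals in the residue field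
  have hnatfrob : ∀ m : ℕ, ((m : intSubring F ⧸ maxIdl F)) ^ p = (m : _) := by
    intro m
    let χ : ZMod p →+* intSubring F ⧸ maxIdl F := ZMod.castHom dvd_rfl _
    calc ((m : intSubring F ⧸ maxIdl F)) ^ p = χ ((m : ZMod p)) ^ p := by rw [map_natCast]
    _ = χ ((m : ZMod p) ^ p) := (map_pow χ _ p).symm
    _ = χ ((m : ZMod p)) := by rw [ZMod.pow_card]
    _ = (m : _) := map_natCast χ m
  -- key Frobenius identity
  have hkey : ∀ m : ℕ, ((m : intSubring F ⧸ maxIdl F) * c0) ^ p ^ k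
      = (m : intSubring F ⧸ maxIdl F) * c0 := by
    rcases hass with ⟨t, rfl⟩ | ⟨q, hq⟩
    · intro m
      have h1 : ((m : intSubring F ⧸ maxIdl F) * c0) ^ p ^ f
          = (m : intSubring F ⧸ maxIdl F) * c0 := pow_residueCard hres _
      rw [pow_mul]
      exact hfix (p ^ f) _ h1 t
    · -- rational constant coefficient case
      have hqnorm : ‖((q : ℚ_[p]))‖ ≤ 1 := by
        rw [← hext, map_ratCast, ← hq]
        exact hint 0
      set zq : ℤ_[p] := ⟨(q : ℚ_[p]), hqnorm⟩ with hzqdef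
      set r : ℕ := PadicInt.zmodRepr zq with hrdef
      have hz := PadicInt.sub_zmodRepr_mem zq
      rw [PadicInt.maximalIdeal_eq_span_p, Ideal.mem_span_singleton] at hz
      obtain ⟨c, hc⟩ := hz
      have hzr : ‖zq - (r : ℤ_[p])‖ < 1 := by
        rw [hc, norm_mul, PadicInt.norm_p]
        calc (p : ℝ)⁻¹ * ‖c‖ ≤ (p : ℝ)⁻¹ * 1 :=
              mul_le_mul_of_nonneg_left (PadicInt.norm_le_one c) (by positivity)
        _ < 1 := by
              rw [mul_one, inv_lt_one_iff₀]
              right; exact_mod_cast hp.one_lt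
      have hzrQ : ‖(q : ℚ_[p]) - ((r : ℕ) : ℚ_[p])‖ < 1 := by
        have h2 : ((zq - (r : ℤ_[p]) : ℤ_[p]) : ℚ_[p]) = (q : ℚ_[p]) - ((r : ℕ) : ℚ_[p]) := by
          push_cast
          rfl
        rw [← h2, PadicInt.padic_norm_e_of_padicInt]
        exact hzr
      have hrF : ‖φ.coeff 0 - ((r : ℕ) : F)‖ < 1 := by
        rw [hq,
          show ((q : F) - ((r : ℕ) : F)) = algebraMap ℚ_[p] F ((q : ℚ_[p]) - ((r : ℕ) : ℚ_[p]))
            by rw [map_sub, map_ratCast, map_natCast], hext]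
        exact hzrQ
      have hc0r : c0 = ((r : ℕ) : intSubring F ⧸ maxIdl F) := by
        rw [hc0def, ← map_natCast ρ, hρdef, Ideal.Quotient.eq, mem_maxIdl]
        have hcoe : ((φO.coeff 0 - ((r : ℕ) : intSubring F) : intSubring F) : F)
            = φ.coeff 0 - ((r : ℕ) : F) := by
          push_cast
          rw [show ((φO.coeff 0 : F)) = φ.coeff 0 from Polynomial.coeff_toSubring' _ _ hsub]
        rw [hcoe]
        exact hrF
      intro m
      have h1 : ((m : intSubring F ⧸ maxIdl F) * c0) ^ p
          = (m : intSubring F ⧸ maxIdl F) * c0 := by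
        rw [mul_pow, hnatfrob m, hc0r, hnatfrob r]
      exact hfix p _ h1 k
  -- main computation in the residue field
  have hmain : ∀ m : ℕ,
      (((fun ψ : Polynomial (intSubring F) => φO.comp ψ)^[m] X).map ρ)
        = X ^ (d ^ m) + C ((m : intSubring F ⧸ maxIdl F) * c0) := by
    intro m
    induction m with
    | zero =>
      rw [Function.iterate_zero_apply, Polynomial.map_X, pow_zero, pow_one, Nat.cast_zero,
        zero_mul, Polynomial.C_0, add_zero]
    | succ m ih =>
      rw [Function.iterate_succ_apply', Polynomial.map_comp, hψ, ih, add_comp, pow_comp, X_comp,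
        C_comp]
      rw [hd, add_pow_char_pow, ← C_pow, hkey m, ← pow_mul, ← pow_succ]
      rw [add_assoc, ← C_add]
      congr 2
      push_cast
      ring
  -- assemble
  intro n _ j
  have hTn : ((n : F) * φ.coeff 0) ∈ intSubring F :=
    mul_mem (show ((n : F)) ∈ intSubring F from hnatnorm n) (hint 0)
  set T : Polynomial (intSubring F) := X ^ (d ^ n) + C (⟨(n : F) * φ.coeff 0, hTn⟩) with hTdef
  have hTc : (⟨(n : F) * φ.coeff 0, hTn⟩ : intSubring F) = (n : intSubring F) * φO.coeff 0 := by
    apply Subtype.ext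
    push_cast
    rw [show ((φO.coeff 0 : F)) = φ.coeff 0 from Polynomial.coeff_toSubring' _ _ hsub]
  have hTκ : T.map ρ = X ^ (d ^ n) + C ((n : intSubring F ⧸ maxIdl F) * c0) := by
    rw [hTdef, Polynomial.map_add, Polynomial.map_pow, map_X, map_C, hTc, map_mul, map_natCast,
      hc0def]
  have hTF : T.map (intSubring F).subtype = X ^ (d ^ n) + C ((n : F) * φ.coeff 0) := by
    rw [hTdef, Polynomial.map_add, Polynomial.map_pow, map_X, map_C]
    rfl
  rw [hiter n, ← hTF, ← Polynomial.map_sub, coeff_map]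
  apply hϖmax
  have hz : (((fun ψ : Polynomial (intSubring F) => φO.comp ψ)^[n] X - T).map ρ) = 0 := by
    rw [Polynomial.map_sub, hmain n, hTκ, sub_self]
  have h4 : ρ (((fun ψ : Polynomial (intSubring F) => φO.comp ψ)^[n] X - T).coeff j) = 0 := by
    have h5 : ((((fun ψ : Polynomial (intSubring F) => φO.comp ψ)^[n] X - T)).map ρ).coeff j
        = 0 := by rw [hz, coeff_zero]
    rwa [coeff_map] at h5
  rw [hρdef] at h4
  have h5 := Ideal.Quotient.eq_zero_iff_mem.mp h4
  exact mem_maxIdl.mp h5
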